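/- Nonthermalization theorem (degenerate case): Let Ĥ be a Hamiltonian on H_S ⊗ H_B with spectral projections π_k. For pure initial states ψ₀^{(1)}, ψ₀^{(2)}, define R(ψ₀) = Σ_k ⟨ψ₀|π_k|ψ₀⟩ D(Tr_B(π_k |ψ₀⟩⟨ψ₀| π_k)/⟨ψ₀|π_k|ψ₀⟩, ψ₀^S) (terms with ⟨ψ₀|π_k|ψ₀⟩ = 0 omitted), and let ω^{(i)} = Σ_k π_k |ψ₀^{(i)}⟩⟨ψ₀^{(i)}| π_k with reductions ω^{S(i)} = Tr_B ω^{(i)}. Then D(ω^{S(1)}, ω^{S(2)}) ≥ D(ψ₀^{S(1)}, ψ₀^{S(2)}) − R(ψ₀^{(1)}) − R(ψ₀^{(2)}). -/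

import Mathlib

open Matrix MeasureTheory Filter
open scoped ComplexOrder Kronecker

/-- The matrix square root `PosSemidef.sqrt` as Mathlib (Dec 2024) defined it; it has since been removed. -/
noncomputable def posSemidefSqrt {n : Type*} [Fintype n] [DecidableEq n] {A : Matrix n n ℂ}
    (hA : A.PosSemidef) : Matrix n n ℂ :=
  hA.isHermitian.eigenvectorUnitary.1 * diagonal ((↑) ∘ (√·) ∘ hA.isHermitian.eigenvalues) *
    (star hA.isHermitian.eigenvectorUnitary : Matrix n n ℂ)

noncomputable def traceNorm {n : Type*} [Fintype n] [DecidableEq n] (A : Matrix n n ℂ) : ℝ :=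
  ((posSemidefSqrt (Matrix.posSemidef_conjTranspose_mul_self A)).trace).re

/-- Trace distance `D(ρ,σ) = ‖ρ-σ‖₁/2`. -/
noncomputable def traceDist {n : Type*} [Fintype n] [DecidableEq n] (ρ σ : Matrix n n ℂ) : ℝ :=
  traceNorm (ρ - σ) / 2

/-- A density matrix: positive semidefinite with unit trace. -/
def IsDensity {n : Type*} [Fintype n] [DecidableEq n] (ρ : Matrix n n ℂ) : Prop :=
  ρ.PosSemidef ∧ ρ.trace = 1

/-- Outer product `|v⟩⟨w|`. -/
noncomputable def outer {n : Type*} (v w : n → ℂ) : Matrix n n ℂ := Matrix.vecMulVec v (star w)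

/-- Partial trace over the bath `B`. -/
noncomputable def ptraceB {dS dB : ℕ} (ρ : Matrix (Fin dS × Fin dB) (Fin dS × Fin dB) ℂ) :
    Matrix (Fin dS) (Fin dS) ℂ := Matrix.of fun i j => ∑ b, ρ (i, b) (j, b)

section PSqrt
open scoped MatrixOrder
variable {n : Type*} [Fintype n] [DecidableEq n]

lemma posSemidefSqrt_eq_cfc {A : Matrix n n ℂ} (hA : A.PosSemidef) :
    posSemidefSqrt hA = CFC.sqrt A := by
  rw [CFC.sqrt_eq_cfc, cfc_nnreal_eq_real _ A, hA.1.cfc_eq]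
  simp only [IsHermitian.cfc, Unitary.conjStarAlgAut_apply, posSemidefSqrt]
  congr 3
  funext i
  simp [Real.coe_sqrt, Real.coe_toNNReal', hA.eigenvalues_nonneg i]

lemma posSemidefSqrt_posSemidef {A : Matrix n n ℂ} (hA : A.PosSemidef) :
    (posSemidefSqrt hA).PosSemidef := by
  rw [posSemidefSqrt_eq_cfc]; exact (CFC.sqrt_nonneg A).posSemidef

lemma posSemidefSqrt_sq {A : Matrix n n ℂ} (hA : A.PosSemidef) :
    (posSemidefSqrt hA) ^ 2 = A := by
  rw [posSemidefSqrt_eq_cfc]; exact CFC.sq_sqrt A hA.nonneg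

lemma eq_posSemidefSqrt_of_sq_eq {A B : Matrix n n ℂ} (hB : B.PosSemidef) (hA : A.PosSemidef)
    (h : B ^ 2 = A) : B = posSemidefSqrt hA := by
  rw [posSemidefSqrt_eq_cfc]
  exact ((CFC.sqrt_eq_iff A B hA.nonneg hB.nonneg).mpr (by rw [← sq]; exact h)).symm

end PSqrt

section Aux

variable {n : Type*} [Fintype n] [DecidableEq n]

lemma rclike_coe (r : ℝ) : (RCLike.ofReal r : ℂ) = (r : ℂ) := rfl

lemma sandwich_mul (U : Matrix n n ℂ) (hU : star U * U = 1) (D E : Matrix n n ℂ) :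
    (U * D * star U) * (U * E * star U) = U * (D * E) * star U := by
  simp only [Matrix.mul_assoc]
  rw [← Matrix.mul_assoc (star U) U (E * star U), hU, Matrix.one_mul]

lemma sandwich_trace (U : Matrix n n ℂ) (hU : star U * U = 1) (D : Matrix n n ℂ) :
    (U * D * star U).trace = D.trace := by
  rw [Matrix.trace_mul_cycle, hU, Matrix.one_mul]

lemma traceNorm_eq_of {A B : Matrix n n ℂ} (h : Aᴴ * A = Bᴴ * B) :
    traceNorm A = traceNorm B := by
  have h2 : (posSemidefSqrt (Matrix.posSemidef_conjTranspose_mul_self A))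
      = (posSemidefSqrt (Matrix.posSemidef_conjTranspose_mul_self B)) := by
    refine eq_posSemidefSqrt_of_sq_eq (posSemidefSqrt_posSemidef _) _ ?_
    rw [posSemidefSqrt_sq, h]
  unfold traceNorm
  rw [h2]

lemma traceNorm_zero : traceNorm (0 : Matrix n n ℂ) = 0 := by
  have h0 : (0 : Matrix n n ℂ)
      = (posSemidefSqrt (Matrix.posSemidef_conjTranspose_mul_self (0 : Matrix n n ℂ))) :=
    eq_posSemidefSqrt_of_sq_eq Matrix.PosSemidef.zero _ (by simp)
  unfold traceNorm
  rw [← h0]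
  simp

lemma sandwich_hermitian (U : Matrix n n ℂ) (d : n → ℝ) {A : Matrix n n ℂ}
    (hAe : A = U * Matrix.diagonal (fun i => ((d i : ℝ) : ℂ)) * star U) : Aᴴ = A := by
  rw [hAe]
  rw [Matrix.conjTranspose_mul, Matrix.conjTranspose_mul, Matrix.diagonal_conjTranspose,
    Matrix.star_eq_conjTranspose, Matrix.conjTranspose_conjTranspose]
  have hd : star (fun i => ((d i : ℝ) : ℂ)) = fun i => ((d i : ℝ) : ℂ) := by
    funext i
    simp [Complex.conj_ofReal]
  rw [hd, Matrix.mul_assoc]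

lemma traceNorm_sandwich (U : Matrix n n ℂ) (hU1 : star U * U = 1) (d : n → ℝ)
    {A : Matrix n n ℂ}
    (hAe : A = U * Matrix.diagonal (fun i => ((d i : ℝ) : ℂ)) * star U) :
    traceNorm A = ∑ i, |d i| := by
  have hAh : Aᴴ = A := sandwich_hermitian U d hAe
  set S : Matrix n n ℂ :=
    U * Matrix.diagonal (fun i => ((|d i| : ℝ) : ℂ)) * star U with hS
  have hSpsd : S.PosSemidef := by
    rw [hS, Matrix.star_eq_conjTranspose]
    refine Matrix.PosSemidef.mul_mul_conjTranspose_same ?_ U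
    refine Matrix.posSemidef_diagonal_iff.mpr fun i => ?_
    rw [Complex.zero_le_real]
    positivity
  have hsq : S ^ 2 = Aᴴ * A := by
    rw [hAh, sq, hS, sandwich_mul U hU1, hAe, sandwich_mul U hU1,
      Matrix.diagonal_mul_diagonal, Matrix.diagonal_mul_diagonal]
    have habs : (fun i => ((|d i| : ℝ) : ℂ) * ((|d i| : ℝ) : ℂ))
        = fun i => ((d i : ℝ) : ℂ) * ((d i : ℝ) : ℂ) := by
      funext i
      rw [← Complex.ofReal_mul, ← Complex.ofReal_mul, abs_mul_abs_self]
    rw [habs]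
  have hsqrt : S = (posSemidefSqrt (Matrix.posSemidef_conjTranspose_mul_self A)) :=
    eq_posSemidefSqrt_of_sq_eq hSpsd _ hsq
  unfold traceNorm
  rw [← hsqrt, hS, sandwich_trace U hU1, Matrix.trace_diagonal]
  push_cast
  simp

lemma spectral_decomp {A : Matrix n n ℂ} (hA : A.IsHermitian) :
    ∃ U : Matrix n n ℂ, star U * U = 1 ∧
      A = U * Matrix.diagonal (fun i => ((hA.eigenvalues i : ℝ) : ℂ)) * star U :=
  ⟨_, Matrix.mem_unitaryGroup_iff'.mp hA.eigenvectorUnitary.2,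
    by simpa only [Unitary.conjStarAlgAut_apply, Function.comp_def, rclike_coe] using hA.spectral_theorem⟩

lemma traceNorm_hermitian {A : Matrix n n ℂ} (hA : A.IsHermitian) :
    traceNorm A = ∑ i, |hA.eigenvalues i| := by
  obtain ⟨U, hU1, hAe⟩ := spectral_decomp hA
  exact traceNorm_sandwich U hU1 _ hAe

lemma sum_abs_diag_le {A : Matrix n n ℂ} (hA : A.IsHermitian) (V : Matrix n n ℂ)
    (hV : V * Vᴴ = 1) :
    ∑ i, ‖(Vᴴ * A * V) i i‖ ≤ traceNorm A := by
  rw [traceNorm_hermitian hA]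
  obtain ⟨U, hU1, hAe⟩ := spectral_decomp hA
  set d : n → ℝ := hA.eigenvalues with hd
  set W : Matrix n n ℂ := Vᴴ * U with hW
  have hWW : Wᴴ * W = 1 := by
    rw [hW, Matrix.conjTranspose_mul, Matrix.conjTranspose_conjTranspose, Matrix.mul_assoc,
      ← Matrix.mul_assoc V, hV, Matrix.one_mul, ← Matrix.star_eq_conjTranspose, hU1]
  have hform : Vᴴ * A * V =
      W * Matrix.diagonal (fun i => ((d i : ℝ) : ℂ)) * Wᴴ := by
    rw [hW, Matrix.conjTranspose_mul, Matrix.conjTranspose_conjTranspose]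
    conv_lhs => rw [hAe]
    rw [Matrix.star_eq_conjTranspose]
    simp only [Matrix.mul_assoc]
  have hentry : ∀ i, (Vᴴ * A * V) i i =
      ∑ j, ((d j : ℝ) : ℂ) * ((Complex.normSq (W i j) : ℝ) : ℂ) := by
    intro i
    rw [hform]
    simp only [Matrix.mul_apply, Matrix.diagonal_apply, Matrix.conjTranspose_apply,
      mul_ite, mul_zero, Finset.sum_ite_eq', Finset.mem_univ, if_true]
    refine Finset.sum_congr rfl fun j _ => ?_
    have h2 : W i j * ((d j : ℝ) : ℂ) * star (W i j)
        = ((d j : ℝ) : ℂ) * (W i j * star (W i j)) := by ring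
    rw [h2, Complex.star_def, Complex.mul_conj]
  have hcol : ∀ j, ∑ i, Complex.normSq (W i j) = 1 := by
    intro j
    have h1 : (Wᴴ * W) j j = 1 := by rw [hWW]; simp
    rw [Matrix.mul_apply] at h1
    simp only [Matrix.conjTranspose_apply] at h1
    have h3 : (((∑ i, Complex.normSq (W i j) : ℝ)) : ℂ) = 1 := by
      push_cast
      rw [← h1]
      refine Finset.sum_congr rfl fun i _ => ?_
      rw [← Complex.mul_conj, Complex.star_def]
      ring
    exact_mod_cast h3
  calc ∑ i, ‖(Vᴴ * A * V) i i‖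
      ≤ ∑ i, ∑ j, |d j| * Complex.normSq (W i j) := by
        refine Finset.sum_le_sum fun i _ => ?_
        rw [hentry i]
        refine le_trans (norm_sum_le _ _) ?_
        refine Finset.sum_le_sum fun j _ => ?_
        rw [norm_mul, Complex.norm_real, Complex.norm_real, Real.norm_eq_abs, Real.norm_eq_abs,
          abs_of_nonneg (Complex.normSq_nonneg _)]
    _ = ∑ j, |d j| := by
        rw [Finset.sum_comm]
        refine Finset.sum_congr rfl fun j _ => ?_
        rw [← Finset.mul_sum, hcol j, mul_one]

lemma traceNorm_add_le {A B : Matrix n n ℂ} (hA : A.IsHermitian) (hB : B.IsHermitian) :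
    traceNorm (A + B) ≤ traceNorm A + traceNorm B := by
  have hC : (A + B).IsHermitian := hA.add hB
  set U : Matrix n n ℂ := (hC.eigenvectorUnitary : Matrix n n ℂ) with hU
  have hUV : U * Uᴴ = 1 := by
    rw [← Matrix.star_eq_conjTranspose]
    exact Matrix.mem_unitaryGroup_iff.mp hC.eigenvectorUnitary.2
  have hdiag : Uᴴ * (A + B) * U = Matrix.diagonal (RCLike.ofReal ∘ hC.eigenvalues) := by
    rw [← Matrix.star_eq_conjTranspose]
    have := hC.conjStarAlgAut_star_eigenvectorUnitary
    rwa [Unitary.conjStarAlgAut_star_apply] at this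
  have h1 : traceNorm (A + B) = ∑ i, ‖(Uᴴ * (A + B) * U) i i‖ := by
    rw [traceNorm_hermitian hC, hdiag]
    refine Finset.sum_congr rfl fun i _ => ?_
    simp only [Matrix.diagonal_apply_eq, Function.comp_apply, rclike_coe, Complex.norm_real, Real.norm_eq_abs]
  rw [h1]
  have hsplit : ∀ i, (Uᴴ * (A + B) * U) i i = (Uᴴ * A * U) i i + (Uᴴ * B * U) i i := by
    intro i
    rw [Matrix.mul_add, Matrix.add_mul]
    simp [Matrix.add_apply]
  calc ∑ i, ‖(Uᴴ * (A + B) * U) i i‖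
      ≤ ∑ i, (‖(Uᴴ * A * U) i i‖ + ‖(Uᴴ * B * U) i i‖) := by
        refine Finset.sum_le_sum fun i _ => ?_
        rw [hsplit i]
        exact norm_add_le _ _
    _ = (∑ i, ‖(Uᴴ * A * U) i i‖) + ∑ i, ‖(Uᴴ * B * U) i i‖ :=
        Finset.sum_add_distrib
    _ ≤ traceNorm A + traceNorm B :=
        add_le_add (sum_abs_diag_le hA U hUV) (sum_abs_diag_le hB U hUV)

lemma traceNorm_smul_real {A : Matrix n n ℂ} {c : ℝ} (hc : 0 ≤ c) :
    traceNorm ((c : ℂ) • A) = c * traceNorm A := by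
  set S := (posSemidefSqrt (Matrix.posSemidef_conjTranspose_mul_self A)) with hSdef
  have hSpsd : S.PosSemidef := posSemidefSqrt_posSemidef _
  have hcS : ((c : ℂ) • S).PosSemidef := by
    constructor
    · unfold Matrix.IsHermitian
      rw [Matrix.conjTranspose_smul, hSpsd.1.eq]
      congr 1
      simp [Complex.ext_iff]
    · intro x
      have hcc : (0 : ℂ) ≤ (c : ℂ) := by rw [Complex.zero_le_real]; exact hc
      exact (hSpsd.smul hcc).2 x
  have hS2 : S ^ 2 = Aᴴ * A := posSemidefSqrt_sq _
  have hsq : ((c : ℂ) • S) ^ 2 = ((c : ℂ) • A)ᴴ * ((c : ℂ) • A) := by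
    rw [Matrix.conjTranspose_smul, Matrix.smul_mul, Matrix.mul_smul, smul_pow, hS2, smul_smul]
    congr 1
    rw [Complex.star_def, Complex.conj_ofReal, sq]
  have hsqrt : (c : ℂ) • S = (posSemidefSqrt (Matrix.posSemidef_conjTranspose_mul_self ((c : ℂ) • A))) :=
    eq_posSemidefSqrt_of_sq_eq hcS _ hsq
  unfold traceNorm
  rw [← hsqrt, Matrix.trace_smul, smul_eq_mul, Complex.mul_re, Complex.ofReal_re,
    Complex.ofReal_im, zero_mul, sub_zero]

lemma traceNorm_sub_comm (A B : Matrix n n ℂ) : traceNorm (A - B) = traceNorm (B - A) := by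
  refine traceNorm_eq_of ?_
  have h0 : A - B = -(B - A) := (neg_sub B A).symm
  rw [h0, Matrix.conjTranspose_neg, Matrix.neg_mul, Matrix.mul_neg, neg_neg]

lemma traceDist_comm (A B : Matrix n n ℂ) : traceDist A B = traceDist B A := by
  unfold traceDist
  rw [traceNorm_sub_comm]

omit [Fintype n] [DecidableEq n] in
lemma isHermitian_sum {ι : Type*} (s : Finset ι) (f : ι → Matrix n n ℂ)
    (h : ∀ i ∈ s, (f i).IsHermitian) : (∑ i ∈ s, f i).IsHermitian := by
  unfold Matrix.IsHermitian
  rw [Matrix.conjTranspose_sum]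
  exact Finset.sum_congr rfl h

lemma traceNorm_sum_le {ι : Type*} [DecidableEq ι] (s : Finset ι) (f : ι → Matrix n n ℂ)
    (h : ∀ i ∈ s, (f i).IsHermitian) :
    traceNorm (∑ i ∈ s, f i) ≤ ∑ i ∈ s, traceNorm (f i) := by
  induction s using Finset.induction with
  | empty => simp [traceNorm_zero]
  | @insert a s ha ih =>
    rw [Finset.sum_insert ha, Finset.sum_insert ha]
    calc traceNorm (f a + ∑ i ∈ s, f i)
        ≤ traceNorm (f a) + traceNorm (∑ i ∈ s, f i) :=
          traceNorm_add_le (h a (Finset.mem_insert_self a s))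
            (isHermitian_sum s f fun i hi => h i (Finset.mem_insert_of_mem hi))
      _ ≤ traceNorm (f a) + ∑ i ∈ s, traceNorm (f i) := by
          gcongr
          exact ih fun i hi => h i (Finset.mem_insert_of_mem hi)

lemma traceDist_triangle {A B C : Matrix n n ℂ} (hAB : (A - B).IsHermitian)
    (hBC : (B - C).IsHermitian) : traceDist A C ≤ traceDist A B + traceDist B C := by
  unfold traceDist
  have h : A - C = (A - B) + (B - C) := by abel
  rw [h]
  linarith [traceNorm_add_le hAB hBC]

end Aux

section Ptrace

lemma outer_isHermitian {N : Type*} (v : N → ℂ) : (outer v v).IsHermitian := by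
  unfold Matrix.IsHermitian outer
  ext i j
  simp only [Matrix.conjTranspose_apply, Matrix.vecMulVec_apply, Pi.star_apply, star_mul',
    star_star]
  ring

lemma proj_outer {N : Type*} [Fintype N] {π : Matrix N N ℂ} (hπ : π.IsHermitian)
    (v : N → ℂ) : π * outer v v * π = outer (π *ᵥ v) (π *ᵥ v) := by
  have hstar : ∀ a b, star (π a b) = π b a := by
    intro a b
    conv_rhs => rw [← hπ.eq]
    rw [Matrix.conjTranspose_apply]
  ext i j
  simp only [outer, Matrix.vecMulVec_apply, Matrix.mul_apply, Pi.star_apply, Matrix.mulVec,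
    dotProduct, star_sum, star_mul', Finset.sum_mul, Finset.mul_sum]
  refine Finset.sum_congr rfl fun b _ => Finset.sum_congr rfl fun a _ => ?_
  rw [hstar j b]
  ring

lemma dot_self_eq {N : Type*} [Fintype N] (w : N → ℂ) :
    star w ⬝ᵥ w = ((∑ i, Complex.normSq (w i) : ℝ) : ℂ) := by
  push_cast
  simp only [dotProduct, Pi.star_apply]
  refine Finset.sum_congr rfl fun i _ => ?_
  rw [Complex.star_def, mul_comm, Complex.mul_conj]

lemma dot_proj {N : Type*} [Fintype N] [DecidableEq N] {π : Matrix N N ℂ}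
    (hπ : π.IsHermitian) (hid : π * π = π) (ψ : N → ℂ) :
    star ψ ⬝ᵥ π *ᵥ ψ = star (π *ᵥ ψ) ⬝ᵥ (π *ᵥ ψ) := by
  conv_rhs => rw [Matrix.star_mulVec, ← Matrix.dotProduct_mulVec, Matrix.mulVec_mulVec,
    hπ.eq, hid]

lemma dot_sum_mulVec {N : Type*} [Fintype N] {m : ℕ} (v w : N → ℂ)
    (f : Fin m → Matrix N N ℂ) :
    star v ⬝ᵥ (∑ k, f k) *ᵥ w = ∑ k, star v ⬝ᵥ (f k) *ᵥ w := by
  have h1 : (∑ k, f k) *ᵥ w = ∑ k, f k *ᵥ w := by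
    funext i
    simp only [Matrix.mulVec, dotProduct, Matrix.sum_apply, Finset.sum_mul,
      Finset.sum_apply]
    rw [Finset.sum_comm]
  rw [h1]
  simp only [dotProduct, Finset.sum_apply, Finset.mul_sum, Pi.star_apply]
  rw [Finset.sum_comm]

variable {dS dB : ℕ}

lemma ptraceB_zero : ptraceB (0 : Matrix (Fin dS × Fin dB) (Fin dS × Fin dB) ℂ) = 0 := by
  ext i j
  simp [ptraceB]

lemma ptraceB_sum {m : ℕ} (f : Fin m → Matrix (Fin dS × Fin dB) (Fin dS × Fin dB) ℂ) :
    ptraceB (∑ k, f k) = ∑ k, ptraceB (f k) := by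
  ext i j
  simp only [ptraceB, Matrix.of_apply, Matrix.sum_apply]
  rw [Finset.sum_comm]

lemma ptraceB_isHermitian {ρ : Matrix (Fin dS × Fin dB) (Fin dS × Fin dB) ℂ}
    (hρ : ρ.IsHermitian) : (ptraceB ρ).IsHermitian := by
  unfold Matrix.IsHermitian
  ext i j
  simp only [Matrix.conjTranspose_apply, ptraceB, Matrix.of_apply, star_sum]
  refine Finset.sum_congr rfl fun b _ => ?_
  conv_rhs => rw [← hρ.eq]
  rw [Matrix.conjTranspose_apply]

lemma smul_real_isHermitian {n : Type*} [Fintype n] [DecidableEq n] (c : ℝ)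
    {M : Matrix n n ℂ} (hM : M.IsHermitian) : ((c : ℂ) • M).IsHermitian := by
  unfold Matrix.IsHermitian
  rw [Matrix.conjTranspose_smul, hM.eq, Complex.star_def, Complex.conj_ofReal]

/-- The key bound: the trace distance from the time-averaged reduced state to the initial
reduced state is at most `R(ψ)`. -/
lemma R_bound {dS dB m : ℕ}
    (π : Fin m → Matrix (Fin dS × Fin dB) (Fin dS × Fin dB) ℂ)
    (hherm : ∀ k, (π k).IsHermitian) (hidem : ∀ k, π k * π k = π k)
    (hsum : ∑ k, π k = 1)
    (ψ : Fin dS × Fin dB → ℂ) (hψ : star ψ ⬝ᵥ ψ = 1)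
    (p : Fin m → ℝ) (hp : ∀ k, p k = (star ψ ⬝ᵥ (π k).mulVec ψ).re) :
    traceDist (ptraceB (∑ k, π k * outer ψ ψ * π k)) (ptraceB (outer ψ ψ)) ≤
      ∑ k, p k * traceDist (((p k : ℂ))⁻¹ • ptraceB (π k * outer ψ ψ * π k))
        (ptraceB (outer ψ ψ)) := by
  set ψS := ptraceB (outer ψ ψ) with hψS
  have hψSh : ψS.IsHermitian := ptraceB_isHermitian (outer_isHermitian ψ)
  have hdot : ∀ k, star ψ ⬝ᵥ (π k) *ᵥ ψ
      = ((∑ i, Complex.normSq ((π k *ᵥ ψ) i) : ℝ) : ℂ) := by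
    intro k
    rw [dot_proj (hherm k) (hidem k), dot_self_eq]
  have hpval : ∀ k, p k = ∑ i, Complex.normSq ((π k *ᵥ ψ) i) := by
    intro k
    rw [hp k, hdot k, Complex.ofReal_re]
  have hpnn : ∀ k, 0 ≤ p k := by
    intro k
    rw [hpval k]
    exact Finset.sum_nonneg fun i _ => Complex.normSq_nonneg _
  have hdot' : ∀ k, star ψ ⬝ᵥ (π k) *ᵥ ψ = ((p k : ℝ) : ℂ) := by
    intro k
    rw [hdot k, hpval k]
  have hsump : ∑ k, ((p k : ℝ) : ℂ) = 1 := by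
    have h1 : ∑ k, star ψ ⬝ᵥ (π k) *ᵥ ψ = 1 := by
      rw [← dot_sum_mulVec, hsum, Matrix.one_mulVec, hψ]
    rw [← h1]
    exact Finset.sum_congr rfl fun k _ => (hdot' k).symm
  have hpzero : ∀ k, p k = 0 → π k * outer ψ ψ * π k = 0 := by
    intro k h0
    have hv : π k *ᵥ ψ = 0 := by
      funext i
      have h2 : ∀ i ∈ Finset.univ, (0:ℝ) ≤ Complex.normSq ((π k *ᵥ ψ) i) :=
        fun i _ => Complex.normSq_nonneg _
      have h3 := (Finset.sum_eq_zero_iff_of_nonneg h2).mp ((hpval k).symm.trans h0)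
      have h4 := h3 i (Finset.mem_univ i)
      simpa using Complex.normSq_eq_zero.mp h4
    rw [proj_outer (hherm k), hv]
    ext i j
    simp [outer, Matrix.vecMulVec_apply]
  have hMk : ∀ k, (ptraceB (π k * outer ψ ψ * π k)).IsHermitian := by
    intro k
    refine ptraceB_isHermitian ?_
    rw [proj_outer (hherm k)]
    exact outer_isHermitian _
  have key : ptraceB (∑ k, π k * outer ψ ψ * π k) - ψS
      = ∑ k, (ptraceB (π k * outer ψ ψ * π k) - ((p k : ℝ) : ℂ) • ψS) := by
    rw [Finset.sum_sub_distrib, ← ptraceB_sum, ← Finset.sum_smul, hsump, one_smul]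
  have hterm : ∀ k, traceNorm (ptraceB (π k * outer ψ ψ * π k) - ((p k : ℝ) : ℂ) • ψS)
      = p k * (2 * traceDist (((p k : ℂ))⁻¹ • ptraceB (π k * outer ψ ψ * π k)) ψS) := by
    intro k
    rcases eq_or_lt_of_le (hpnn k) with h0 | hpos
    · rw [hpzero k h0.symm, ptraceB_zero, ← h0]
      simp [traceNorm_zero]
    · have hne : ((p k : ℝ) : ℂ) ≠ 0 := Complex.ofReal_ne_zero.mpr (ne_of_gt hpos)
      have h5 : ptraceB (π k * outer ψ ψ * π k) - ((p k : ℝ) : ℂ) • ψS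
          = ((p k : ℝ) : ℂ) • (((p k : ℝ) : ℂ)⁻¹ • ptraceB (π k * outer ψ ψ * π k) - ψS) := by
        rw [smul_sub, smul_inv_smul₀ hne]
      rw [h5, traceNorm_smul_real (le_of_lt hpos)]
      unfold traceDist
      ring
  have htermherm : ∀ k ∈ Finset.univ,
      (ptraceB (π k * outer ψ ψ * π k) - ((p k : ℝ) : ℂ) • ψS).IsHermitian :=
    fun k _ => (hMk k).sub (smul_real_isHermitian (p k) hψSh)
  have hle := traceNorm_sum_le Finset.univ _ htermherm
  rw [← key] at hle
  have h7 : traceNorm (ptraceB (∑ k, π k * outer ψ ψ * π k) - ψS)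
      ≤ (∑ k, p k * traceDist (((p k : ℂ))⁻¹ • ptraceB (π k * outer ψ ψ * π k)) ψS) * 2 := by
    refine le_trans hle ?_
    rw [Finset.sum_mul]
    refine le_of_eq (Finset.sum_congr rfl fun k _ => ?_)
    rw [hterm k]
    ring
  have h8 : traceDist (ptraceB (∑ k, π k * outer ψ ψ * π k)) ψS
      = traceNorm (ptraceB (∑ k, π k * outer ψ ψ * π k) - ψS) / 2 := rfl
  rw [h8]
  linarith

end Ptrace

/-- Nonthermalization theorem (degenerate case): with spectral projections `π_k` of `Ĥ`,
time-averaged states `ω^{(i)} = ∑_k π_k |ψ₀⟩⟨ψ₀| π_k`, and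
`R(ψ₀) = ∑_k ⟨ψ₀|π_k|ψ₀⟩ D(Tr_B(π_k|ψ₀⟩⟨ψ₀|π_k)/⟨ψ₀|π_k|ψ₀⟩, ψ₀^S)`
(terms with `⟨ψ₀|π_k|ψ₀⟩ = 0` vanish, as then also the numerator vanishes), one has
`D(ω^{S(1)}, ω^{S(2)}) ≥ D(ψ₀^{S(1)}, ψ₀^{S(2)}) − R(ψ₀^{(1)}) − R(ψ₀^{(2)})`. -/
theorem nonthermalization_degenerate {dS dB m : ℕ}
    (H : Matrix (Fin dS × Fin dB) (Fin dS × Fin dB) ℂ)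
    (π : Fin m → Matrix (Fin dS × Fin dB) (Fin dS × Fin dB) ℂ) (Em : Fin m → ℝ)
    (hEm : Function.Injective Em)
    (hherm : ∀ k, (π k).IsHermitian) (hidem : ∀ k, π k * π k = π k)
    (horth : ∀ k l, k ≠ l → π k * π l = 0) (hsum : ∑ k, π k = 1)
    (hspec : H = ∑ k, (Em k : ℂ) • π k)
    (ψ₁ ψ₂ : Fin dS × Fin dB → ℂ)
    (hψ₁ : star ψ₁ ⬝ᵥ ψ₁ = 1) (hψ₂ : star ψ₂ ⬝ᵥ ψ₂ = 1)
    (ψS₁ ψS₂ : Matrix (Fin dS) (Fin dS) ℂ)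
    (hψS₁ : ψS₁ = ptraceB (outer ψ₁ ψ₁)) (hψS₂ : ψS₂ = ptraceB (outer ψ₂ ψ₂))
    (p₁ p₂ : Fin m → ℝ)
    (hp₁ : ∀ k, p₁ k = (star ψ₁ ⬝ᵥ (π k).mulVec ψ₁).re)
    (hp₂ : ∀ k, p₂ k = (star ψ₂ ⬝ᵥ (π k).mulVec ψ₂).re)
    (R₁ R₂ : ℝ)
    (hR₁ : R₁ = ∑ k, p₁ k *
      traceDist (((p₁ k : ℂ))⁻¹ • ptraceB (π k * outer ψ₁ ψ₁ * π k)) ψS₁)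
    (hR₂ : R₂ = ∑ k, p₂ k *
      traceDist (((p₂ k : ℂ))⁻¹ • ptraceB (π k * outer ψ₂ ψ₂ * π k)) ψS₂)
    (ωS₁ ωS₂ : Matrix (Fin dS) (Fin dS) ℂ)
    (hωS₁ : ωS₁ = ptraceB (∑ k, π k * outer ψ₁ ψ₁ * π k))
    (hωS₂ : ωS₂ = ptraceB (∑ k, π k * outer ψ₂ ψ₂ * π k)) :
    traceDist ωS₁ ωS₂ ≥ traceDist ψS₁ ψS₂ - R₁ - R₂ := by
  have hψS₁h : ψS₁.IsHermitian := by
    rw [hψS₁]; exact ptraceB_isHermitian (outer_isHermitian ψ₁)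
  have hψS₂h : ψS₂.IsHermitian := by
    rw [hψS₂]; exact ptraceB_isHermitian (outer_isHermitian ψ₂)
  have hωherm : ∀ (ψ : Fin dS × Fin dB → ℂ),
      (ptraceB (∑ k, π k * outer ψ ψ * π k)).IsHermitian := fun ψ =>
    ptraceB_isHermitian (isHermitian_sum _ _ fun k _ => by
      rw [proj_outer (hherm k)]; exact outer_isHermitian _)
  have hωS₁h : ωS₁.IsHermitian := by rw [hωS₁]; exact hωherm ψ₁
  have hωS₂h : ωS₂.IsHermitian := by rw [hωS₂]; exact hωherm ψ₂
  have hb₁ : traceDist ωS₁ ψS₁ ≤ R₁ := by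
    rw [hωS₁, hR₁, hψS₁]
    exact R_bound π hherm hidem hsum ψ₁ hψ₁ p₁ hp₁
  have hb₂ : traceDist ωS₂ ψS₂ ≤ R₂ := by
    rw [hωS₂, hR₂, hψS₂]
    exact R_bound π hherm hidem hsum ψ₂ hψ₂ p₂ hp₂
  have t1 : traceDist ψS₁ ψS₂ ≤ traceDist ψS₁ ωS₁ + traceDist ωS₁ ψS₂ :=
    traceDist_triangle (hψS₁h.sub hωS₁h) (hωS₁h.sub hψS₂h)
  have t2 : traceDist ωS₁ ψS₂ ≤ traceDist ωS₁ ωS₂ + traceDist ωS₂ ψS₂ :=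
    traceDist_triangle (hωS₁h.sub hωS₂h) (hωS₂h.sub hψS₂h)
  have s1 : traceDist ψS₁ ωS₁ = traceDist ωS₁ ψS₁ := traceDist_comm _ _
  linarith [hb₁, hb₂, t1, t2]
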